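/- Let C, D be ℂ-linear categories with finite-dimensional Hom spaces and Serre functors S_C, S_D respectively. Let F : C → D be a functor with left adjoint G. Then F also admits a right adjoint, namely S_C ∘ G ∘ S_D^{-1}. -/

import Mathlib

open CategoryTheory

/-- A Serre functor on a `ℂ`-linear category `C`: an autoequivalence `S` together with
bifunctorial isomorphisms `Hom(A,B) ≅ Hom(B, S A)*` (dual vector space), natural in
both variables. -/
structure SerreFunctor (C : Type*) [Category C] [Preadditive C] [Linear ℂ C] where
  S : C ⥤ C
  additive : S.Additive
  equiv : S.IsEquivalence
  σ : ∀ A B : C, (A ⟶ B) ≃ₗ[ℂ] Module.Dual ℂ (B ⟶ S.obj A)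
  nat_left : ∀ {A' A B : C} (f : A' ⟶ A) (h : A ⟶ B) (k : B ⟶ S.obj A'),
    σ A' B (f ≫ h) k = σ A B h (k ≫ S.map f)
  nat_right : ∀ {A B B' : C} (h : A ⟶ B) (g : B ⟶ B') (k : B' ⟶ S.obj A),
    σ A B' (h ≫ g) k = σ A B h (g ≫ k)

section Aux

set_option linter.unusedSectionVars false

variable {C D : Type*} [Category C] [Category D] [Preadditive C] [Preadditive D]
    [Linear ℂ C] [Linear ℂ D]
    [∀ A B : C, FiniteDimensional ℂ (A ⟶ B)] [∀ A B : D, FiniteDimensional ℂ (A ⟶ B)]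

/-- The adjunction hom-equivalence, as a linear equivalence. -/
noncomputable def auxV (F : C ⥤ D) [F.Additive] [F.Linear ℂ] (G : D ⥤ C) (adj : G ⊣ F)
    (d' : D) (c : C) : (G.obj d' ⟶ c) ≃ₗ[ℂ] (d' ⟶ F.obj c) :=
  { adj.homEquiv d' c with
    map_add' := by
      intro x y
      simp [Adjunction.homEquiv_unit]
    map_smul' := by
      intro r x
      simp [Adjunction.homEquiv_unit] }

@[simp] lemma auxV_apply (F : C ⥤ D) [F.Additive] [F.Linear ℂ] (G : D ⥤ C) (adj : G ⊣ F)
    (d' : D) (c : C) (g : G.obj d' ⟶ c) :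
    auxV F G adj d' c g = adj.homEquiv d' c g := rfl

/-- Post-composition with the inverse of the counit, as a linear equivalence. -/
noncomputable def auxY (SD : SerreFunctor D) (F : C ⥤ D) (SD' : D ⥤ D)
    (ε : SD' ⋙ SD.S ≅ 𝟭 D) (c : C) (d : D) :
    (F.obj c ⟶ d) ≃ₗ[ℂ] (F.obj c ⟶ SD.S.obj (SD'.obj d)) where
  toFun h := h ≫ ε.inv.app d
  invFun h := h ≫ ε.hom.app d
  left_inv h := by simp
  right_inv h := by
    have : ε.hom.app d ≫ ε.inv.app d = 𝟙 _ := by simp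
    simp [Category.assoc, this]
  map_add' x y := by simp [Preadditive.add_comp]
  map_smul' r x := by simp [Linear.smul_comp]

@[simp] lemma auxY_apply (SD : SerreFunctor D) (F : C ⥤ D) (SD' : D ⥤ D)
    (ε : SD' ⋙ SD.S ≅ 𝟭 D) (c : C) (d : D) (h : F.obj c ⟶ d) :
    auxY SD F SD' ε c d h = h ≫ ε.inv.app d := rfl

/-- The dual-level comparison map. -/
noncomputable def auxT (SC : SerreFunctor C) (SD : SerreFunctor D)
    (F : C ⥤ D) [F.Additive] [F.Linear ℂ] (G : D ⥤ C) (adj : G ⊣ F)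
    (SD' : D ⥤ D) (ε : SD' ⋙ SD.S ≅ 𝟭 D) (c : C) (d : D) :
    Module.Dual ℂ (c ⟶ SC.S.obj (G.obj (SD'.obj d))) ≃ₗ[ℂ] Module.Dual ℂ (F.obj c ⟶ d) :=
  (SC.σ (G.obj (SD'.obj d)) c).symm.trans <|
    (auxV F G adj (SD'.obj d) c).trans <|
      (SD.σ (SD'.obj d) (F.obj c)).trans (auxY SD F SD' ε c d).dualMap

/-- The hom-equivalence exhibiting `SD' ⋙ G ⋙ SC.S` as right adjoint to `F`. -/
noncomputable def auxE (SC : SerreFunctor C) (SD : SerreFunctor D)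
    (F : C ⥤ D) [F.Additive] [F.Linear ℂ] (G : D ⥤ C) (adj : G ⊣ F)
    (SD' : D ⥤ D) (ε : SD' ⋙ SD.S ≅ 𝟭 D) (c : C) (d : D) :
    (F.obj c ⟶ d) ≃ₗ[ℂ] (c ⟶ SC.S.obj (G.obj (SD'.obj d))) :=
  (Module.evalEquiv ℂ (F.obj c ⟶ d)).trans <|
    ((auxT SC SD F G adj SD' ε c d).dualMap.trans
      (Module.evalEquiv ℂ (c ⟶ SC.S.obj (G.obj (SD'.obj d)))).symm)

lemma auxE_key (SC : SerreFunctor C) (SD : SerreFunctor D)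
    (F : C ⥤ D) [F.Additive] [F.Linear ℂ] (G : D ⥤ C) (adj : G ⊣ F)
    (SD' : D ⥤ D) (ε : SD' ⋙ SD.S ≅ 𝟭 D) (c : C) (d : D)
    (a : F.obj c ⟶ d) (g : G.obj (SD'.obj d) ⟶ c) :
    SC.σ (G.obj (SD'.obj d)) c g (auxE SC SD F G adj SD' ε c d a) =
      SD.σ (SD'.obj d) (F.obj c) (adj.homEquiv (SD'.obj d) c g) (a ≫ ε.inv.app d) := by
  simp [auxE, auxT, Module.apply_evalEquiv_symm_apply, LinearEquiv.dualMap_apply,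
    Module.Dual.eval_apply]

lemma auxE_ext (SC : SerreFunctor C) (G : D ⥤ C) (SD' : D ⥤ D) (c : C) (d : D)
    {x y : c ⟶ SC.S.obj (G.obj (SD'.obj d))}
    (h : ∀ g : G.obj (SD'.obj d) ⟶ c,
      SC.σ (G.obj (SD'.obj d)) c g x = SC.σ (G.obj (SD'.obj d)) c g y) : x = y := by
  apply (Module.evalEquiv ℂ (c ⟶ SC.S.obj (G.obj (SD'.obj d)))).injective
  ext ξ
  have h' := h ((SC.σ (G.obj (SD'.obj d)) c).symm ξ)
  simpa [Module.Dual.eval_apply] using h'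

lemma auxE_nat_left (SC : SerreFunctor C) (SD : SerreFunctor D)
    (F : C ⥤ D) [F.Additive] [F.Linear ℂ] (G : D ⥤ C) (adj : G ⊣ F)
    (SD' : D ⥤ D) (ε : SD' ⋙ SD.S ≅ 𝟭 D) (c' c : C) (d : D)
    (f : c' ⟶ c) (a : F.obj c ⟶ d) :
    auxE SC SD F G adj SD' ε c' d (F.map f ≫ a) =
      f ≫ auxE SC SD F G adj SD' ε c d a := by
  apply auxE_ext SC G SD' c' d
  intro g
  conv_rhs => rw [← SC.nat_right g f]
  rw [auxE_key, auxE_key, Adjunction.homEquiv_naturality_right, SD.nat_right,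
    Category.assoc]

lemma auxE_nat_right (SC : SerreFunctor C) (SD : SerreFunctor D)
    (F : C ⥤ D) [F.Additive] [F.Linear ℂ] (G : D ⥤ C) (adj : G ⊣ F)
    (SD' : D ⥤ D) (ε : SD' ⋙ SD.S ≅ 𝟭 D) (c : C) (d d' : D)
    (a : F.obj c ⟶ d) (m : d ⟶ d') :
    auxE SC SD F G adj SD' ε c d' (a ≫ m) =
      auxE SC SD F G adj SD' ε c d a ≫ SC.S.map (G.map (SD'.map m)) := by
  apply auxE_ext SC G SD' c d'
  intro g
  conv_rhs => rw [← SC.nat_left (G.map (SD'.map m)) g]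
  rw [auxE_key, auxE_key, Adjunction.homEquiv_naturality_left, SD.nat_left,
    Category.assoc]
  have hnat : ε.inv.app d ≫ SD.S.map (SD'.map m) = m ≫ ε.inv.app d' := by
    simpa using (ε.inv.naturality m).symm
  congr 1
  rw [Category.assoc, hnat]

end Aux

/- STATEMENT 12: If `C`, `D` are `ℂ`-linear Hom-finite categories with Serre functors
`S_C`, `S_D`, and `F : C ⥤ D` has a left adjoint `G`, then `F` admits a right adjoint,
namely `S_C ∘ G ∘ S_D⁻¹`; we express `R = S_C ∘ G ∘ S_D⁻¹` by `S_D ⋙ R ≅ G ⋙ S_C`. -/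
theorem stmt12 {C D : Type*} [Category C] [Category D] [Preadditive C] [Preadditive D]
    [Linear ℂ C] [Linear ℂ D]
    [∀ A B : C, FiniteDimensional ℂ (A ⟶ B)] [∀ A B : D, FiniteDimensional ℂ (A ⟶ B)]
    (SC : SerreFunctor C) (SD : SerreFunctor D)
    (F : C ⥤ D) [F.Additive] [F.Linear ℂ] (G : D ⥤ C) (adj : G ⊣ F) :
    ∃ R : D ⥤ C, Nonempty (F ⊣ R) ∧ Nonempty (SD.S ⋙ R ≅ G ⋙ SC.S) := by
  haveI := SD.equiv
  let E := SD.S.asEquivalence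
  let SD' : D ⥤ D := E.inverse
  let ε : SD' ⋙ SD.S ≅ 𝟭 D := E.counitIso
  refine ⟨SD' ⋙ G ⋙ SC.S, ⟨Adjunction.mkOfHomEquiv
    { homEquiv := fun c d => (auxE SC SD F G adj SD' ε c d).toEquiv
      homEquiv_naturality_left_symm := ?_
      homEquiv_naturality_right := ?_ }⟩, ⟨?_⟩⟩
  · intro c' c d f g
    apply (auxE SC SD F G adj SD' ε c' d).toEquiv.injective
    simp only [LinearEquiv.coe_toEquiv, LinearEquiv.coe_toEquiv_symm]
    erw [LinearEquiv.apply_symm_apply, auxE_nat_left SC SD F G adj SD' ε c' c d f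
      ((auxE SC SD F G adj SD' ε c d).symm g), LinearEquiv.apply_symm_apply]
  · intro c d d' a m
    exact auxE_nat_right SC SD F G adj SD' ε c d d' a m
  · exact (Functor.associator _ _ _).symm ≪≫
      Functor.isoWhiskerRight E.unitIso.symm (G ⋙ SC.S) ≪≫ Functor.leftUnitor _
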